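/- Let A be a finite set with |A| ≥ 2, take one receiver with one type, state set S = A, receiver utility u(s,a) = 1 if a = s and 0 otherwise, and sender utility v(s,a) = 1 if a = s and 0 otherwise (so that W(ν) = max_{s∈S} ν(s)). Let μ ∈ Δ(S) satisfy μ(s) > 0 for every s. Then W̄* = sup_{τ ∈ T_μ} ∫_{Δ(S)} W dτ = 1, and every finitely supported τ ∈ T_μ attaining this supremum equals Σ_{s∈S} μ(s) δ_{δ_s}; in particular its support has cardinality exactly |A|, so no optimal finitely supported τ has support of cardinality smaller than |A|. -/

import Mathlib

set_option linter.unusedSectionVars false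
set_option linter.unusedVariables false


open MeasureTheory Finset

noncomputable section

/-- Expected utility `Σ_s u(s,a) ν(s)` of action `a` under belief `ν ∈ Δ(S)`. -/
def expUtil {S α : Type*} [Fintype S] (u : S → α → ℝ) (ν : stdSimplex ℝ S) (a : α) : ℝ :=
  ∑ s, u s a * (ν : S → ℝ) s

/-- Admissible (optimal) actions `A*(ν) = argmax_a Σ_s u(s,a) ν(s)`. -/
def admissible {S α : Type*} [Fintype S] (u : S → α → ℝ) (ν : stdSimplex ℝ S) : Set α :=
  {a | ∀ b, expUtil u ν b ≤ expUtil u ν a}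

/-- Sender's gain for a single receiver with a single type:
`W(ν) = max_{a ∈ A*(ν)} Σ_s v(s,a) ν(s)` (ties broken in the sender's favor). -/
def senderGain₁ {S α : Type*} [Fintype S] (u v : S → α → ℝ) (ν : stdSimplex ℝ S) : ℝ :=
  sSup {x : ℝ | ∃ a ∈ admissible u ν, x = expUtil v ν a}

section Aux

variable {A : Type*} [Fintype A] [DecidableEq A]

lemma finset_meas {α : Type*} [MeasurableSpace α] [MeasurableSingletonClass α] (μ : Measure α)
    (s : Finset α) : μ ↑s = ∑ x ∈ s, μ {x} := by
  rw [show (↑s : Set α) = ⋃ x ∈ s, {x} by ext x; simp]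
  exact measure_biUnion_finset (by intro a _ b _ hab; simp [Set.disjoint_singleton, hab])
    (fun b _ => measurableSet_singleton b)

lemma expUtil_eq (u : A → A → ℝ)
    (hu : ∀ s a, u s a = if a = s then 1 else 0) (ν : stdSimplex ℝ A) (a : A) :
    expUtil u ν a = (ν : A → ℝ) a := by
  simp only [expUtil, hu]
  rw [Finset.sum_eq_single a] <;> simp +contextual [eq_comm]

lemma gain_eq (u v : A → A → ℝ)
    (hu : ∀ s a, u s a = if a = s then 1 else 0)
    (hv : ∀ s a, v s a = if a = s then 1 else 0)
    [Nonempty A] (ν : stdSimplex ℝ A) :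
    ∃ a₀, (∀ b, (ν : A → ℝ) b ≤ (ν : A → ℝ) a₀) ∧ senderGain₁ u v ν = (ν : A → ℝ) a₀ := by
  obtain ⟨a₀, -, ha₀⟩ := Finset.exists_max_image Finset.univ (ν : A → ℝ) ⟨Classical.arbitrary A, mem_univ _⟩
  refine ⟨a₀, fun b => ha₀ b (mem_univ b), ?_⟩
  have hset : {x : ℝ | ∃ a ∈ admissible u ν, x = expUtil v ν a} = {(ν : A → ℝ) a₀} := by
    ext x
    simp only [Set.mem_setOf_eq, Set.mem_singleton_iff]
    constructor
    · rintro ⟨a, ha, rfl⟩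
      rw [expUtil_eq v hv]
      exact le_antisymm (by simpa [expUtil_eq u hu] using ha₀ a (mem_univ a))
        (by simpa [expUtil_eq u hu] using ha a₀)
    · rintro rfl
      exact ⟨a₀, fun b => by simp [expUtil_eq u hu]; exact ha₀ b (mem_univ b),
        (expUtil_eq v hv ν a₀).symm⟩
  rw [senderGain₁, hset, csSup_singleton]

lemma coord_nonneg (ν : stdSimplex ℝ A) (s : A) : 0 ≤ (ν : A → ℝ) s := ν.2.1 s
lemma coord_sum (ν : stdSimplex ℝ A) : ∑ s, (ν : A → ℝ) s = 1 := ν.2.2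
lemma coord_le_one (ν : stdSimplex ℝ A) (s : A) : (ν : A → ℝ) s ≤ 1 := by
  rw [← coord_sum ν]
  exact Finset.single_le_sum (fun b _ => coord_nonneg ν b) (mem_univ s)

lemma gain_mem_Icc (u v : A → A → ℝ)
    (hu : ∀ s a, u s a = if a = s then 1 else 0)
    (hv : ∀ s a, v s a = if a = s then 1 else 0)
    [Nonempty A] (ν : stdSimplex ℝ A) :
    senderGain₁ u v ν ∈ Set.Icc (0:ℝ) 1 := by
  obtain ⟨a₀, -, h⟩ := gain_eq u v hu hv ν
  rw [h]
  exact ⟨coord_nonneg ν a₀, coord_le_one ν a₀⟩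

lemma eq_vertex (e : A → stdSimplex ℝ A)
    (he : ∀ s s', (e s : A → ℝ) s' = if s' = s then 1 else 0)
    (ν : stdSimplex ℝ A) (a₀ : A) (h1 : (ν : A → ℝ) a₀ = 1) : ν = e a₀ := by
  have hz : ∀ b, b ≠ a₀ → (ν : A → ℝ) b = 0 := by
    have hsum : ∑ b ∈ univ.erase a₀, (ν : A → ℝ) b = 0 := by
      have := coord_sum ν
      rw [← Finset.add_sum_erase _ _ (mem_univ a₀), h1] at this
      linarith
    intro b hb
    exact (Finset.sum_eq_zero_iff_of_nonneg (fun c _ => coord_nonneg ν c)).1 hsum b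
      (Finset.mem_erase.2 ⟨hb, mem_univ b⟩)
  apply Subtype.ext; funext b
  show (ν : A → ℝ) b = (e a₀ : A → ℝ) b
  rw [he]
  by_cases hb : b = a₀
  · simp [hb, h1]
  · simp [hb, hz b hb]

lemma gain_eq_one_iff (u v : A → A → ℝ)
    (hu : ∀ s a, u s a = if a = s then 1 else 0)
    (hv : ∀ s a, v s a = if a = s then 1 else 0)
    [Nonempty A] (e : A → stdSimplex ℝ A)
    (he : ∀ s s', (e s : A → ℝ) s' = if s' = s then 1 else 0)
    (ν : stdSimplex ℝ A) :
    senderGain₁ u v ν = 1 ↔ ∃ s, ν = e s := by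
  constructor
  · intro h
    obtain ⟨a₀, -, h'⟩ := gain_eq u v hu hv ν
    exact ⟨a₀, eq_vertex e he ν a₀ (h'.symm.trans h)⟩
  · rintro ⟨s, rfl⟩
    obtain ⟨a₀, hmax, h'⟩ := gain_eq u v hu hv (e s)
    rw [h']
    have h1 := hmax s
    rw [he] at h1; simp at h1
    refine le_antisymm (coord_le_one _ _) ?_
    calc (1:ℝ) = (e s : A → ℝ) s := by rw [he]; simp
    _ ≤ _ := hmax s

example : MeasurableSingletonClass (stdSimplex ℝ A) := inferInstance
example (s : A) : Measurable fun ν : stdSimplex ℝ A => (ν : A → ℝ) s :=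
  (measurable_pi_apply s).comp measurable_subtype_coe

lemma integrable_dirac' {α E : Type*} [MeasurableSpace α] [MeasurableSingletonClass α]
    [NormedAddCommGroup E] (f : α → E) (a : α) : Integrable f (Measure.dirac a) := by
  apply (integrable_const (f a)).congr
  rw [Filter.EventuallyEq, ae_dirac_eq]
  exact Filter.eventually_pure.2 rfl

lemma integral_mix (μ : stdSimplex ℝ A) (e : A → stdSimplex ℝ A)
    (f : stdSimplex ℝ A → ℝ) :
    ∫ ν, f ν ∂(∑ s, ENNReal.ofReal ((μ : A → ℝ) s) • Measure.dirac (e s)) =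
      ∑ s, (μ : A → ℝ) s * f (e s) := by
  rw [integral_finset_sum_measure (fun s _ => ((integrable_dirac' f (e s)).smul_measure
    ENNReal.ofReal_ne_top))]
  congr 1; funext s
  rw [integral_smul_measure, integral_dirac]
  simp [ENNReal.toReal_ofReal (coord_nonneg μ s)]

lemma part1 (hA : 2 ≤ Fintype.card A) (u v : A → A → ℝ)
    (hu : ∀ s a, u s a = if a = s then 1 else 0)
    (hv : ∀ s a, v s a = if a = s then 1 else 0)
    (μ : stdSimplex ℝ A) (hμ : ∀ s, 0 < (μ : A → ℝ) s)
    (e : A → stdSimplex ℝ A) (he : ∀ s s', (e s : A → ℝ) s' = if s' = s then 1 else 0) :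
    sSup {x : ℝ | ∃ τ : ProbabilityMeasure (stdSimplex ℝ A),
        (∀ s, (∫ ν, (ν : A → ℝ) s ∂(τ : Measure (stdSimplex ℝ A))) = (μ : A → ℝ) s) ∧
        x = ∫ ν, senderGain₁ u v ν ∂(τ : Measure (stdSimplex ℝ A))} = 1 := by
  have : Nonempty A := Fintype.card_pos_iff.1 (by omega)
  have hprob : IsProbabilityMeasure (∑ s, ENNReal.ofReal ((μ : A → ℝ) s) • Measure.dirac (e s)) := by
    constructor
    simp only [Measure.coe_finset_sum, Finset.sum_apply, Measure.smul_apply,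
      Measure.dirac_apply_of_mem (Set.mem_univ _), smul_eq_mul, mul_one]
    rw [← ENNReal.ofReal_sum_of_nonneg (fun s _ => coord_nonneg μ s), coord_sum]
    simp
  set τ₀ : ProbabilityMeasure (stdSimplex ℝ A) := ⟨_, hprob⟩ with hτ₀
  have hmem : (1:ℝ) ∈ {x : ℝ | ∃ τ : ProbabilityMeasure (stdSimplex ℝ A),
      (∀ s, (∫ ν, (ν : A → ℝ) s ∂(τ : Measure (stdSimplex ℝ A))) = (μ : A → ℝ) s) ∧
      x = ∫ ν, senderGain₁ u v ν ∂(τ : Measure (stdSimplex ℝ A))} := by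
    refine ⟨τ₀, fun s => ?_, ?_⟩
    · rw [hτ₀]
      show (∫ ν, (ν : A → ℝ) s ∂(∑ t, ENNReal.ofReal ((μ : A → ℝ) t) • Measure.dirac (e t))) = _
      rw [integral_mix]
      rw [Finset.sum_eq_single s]
      · simp [he]
      · intro t _ hts; rw [he]; simp [Ne.symm hts]
      · simp
    · rw [hτ₀]
      show _ = (∫ ν, senderGain₁ u v ν ∂(∑ t, ENNReal.ofReal ((μ : A → ℝ) t) • Measure.dirac (e t)))
      rw [integral_mix]
      have : ∀ t : A, senderGain₁ u v (e t) = 1 := fun t =>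
        (gain_eq_one_iff u v hu hv e he (e t)).2 ⟨t, rfl⟩
      simp only [this, mul_one, coord_sum]
  refine le_antisymm (csSup_le ⟨1, hmem⟩ ?_) (le_csSup ⟨1, ?_⟩ hmem)
  all_goals {
    rintro x ⟨τ, -, rfl⟩
    calc ∫ ν, senderGain₁ u v ν ∂(τ : Measure (stdSimplex ℝ A))
        ≤ ‖∫ ν, senderGain₁ u v ν ∂(τ : Measure (stdSimplex ℝ A))‖ := le_abs_self _
      _ ≤ 1 := by
          have := norm_integral_le_of_norm_le_const (μ := (τ : Measure (stdSimplex ℝ A)))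
            (f := fun ν => senderGain₁ u v ν) (C := 1) ?_
          · simpa using this
          · filter_upwards with ν
            obtain ⟨h0, h1⟩ := gain_mem_Icc u v hu hv ν
            rw [Real.norm_eq_abs, abs_le]; exact ⟨by linarith, h1⟩ }

lemma part2 (hA : 2 ≤ Fintype.card A) (u v : A → A → ℝ)
    (hu : ∀ s a, u s a = if a = s then 1 else 0)
    (hv : ∀ s a, v s a = if a = s then 1 else 0)
    (μ : stdSimplex ℝ A) (hμ : ∀ s, 0 < (μ : A → ℝ) s)
    (e : A → stdSimplex ℝ A) (he : ∀ s s', (e s : A → ℝ) s' = if s' = s then 1 else 0)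
    (τ : ProbabilityMeasure (stdSimplex ℝ A))
    (hbary : ∀ s, (∫ ν, (ν : A → ℝ) s ∂(τ : Measure (stdSimplex ℝ A))) = (μ : A → ℝ) s)
    (hfin : ∃ F : Finset (stdSimplex ℝ A), (τ : Measure (stdSimplex ℝ A)) (↑F) = 1)
    (hopt : (∫ ν, senderGain₁ u v ν ∂(τ : Measure (stdSimplex ℝ A))) = 1) :
    ((τ : Measure (stdSimplex ℝ A)) =
        ∑ s, ENNReal.ofReal ((μ : A → ℝ) s) • Measure.dirac (e s)) ∧
    (∀ F : Finset (stdSimplex ℝ A),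
      (τ : Measure (stdSimplex ℝ A)) (↑F) = 1 → Fintype.card A ≤ F.card) := by
  classical
  have : Nonempty A := Fintype.card_pos_iff.1 (by omega)
  set T : Measure (stdSimplex ℝ A) := (τ : Measure (stdSimplex ℝ A)) with hT
  have hTprob : IsProbabilityMeasure T := τ.2
  obtain ⟨F, hF⟩ := hfin
  have hcompl : ∀ F' : Finset (stdSimplex ℝ A), T ↑F' = 1 → T (↑F')ᶜ = 0 := by
    intro F' hF'
    rw [measure_compl F'.measurableSet (measure_ne_top _ _), hF', measure_univ, tsub_self]
  -- e is injective
  have einj : Function.Injective e := by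
    intro s t hst
    by_contra hne
    have h1 : (e s : A → ℝ) s = 1 := by rw [he]; simp
    have h2 : (e t : A → ℝ) s = 0 := by rw [he]; simp [hne]
    rw [hst, h2] at h1; norm_num at h1
  set W : stdSimplex ℝ A → ℝ := fun ν => senderGain₁ u v ν with hW
  -- W is a.e. strongly measurable and integrable
  have hWaesm : AEStronglyMeasurable W T := by
    refine ⟨fun ν => ∑ ν₀ ∈ F, if ν = ν₀ then W ν₀ else 0, ?_, ?_⟩
    · apply Measurable.stronglyMeasurable
      apply Finset.measurable_sum
      intro ν₀ _
      exact measurable_const.ite (measurableSet_singleton ν₀) measurable_const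
    · refine measure_mono_null (fun ν hν => ?_) (hcompl F hF)
      simp only [Set.mem_compl_iff, Finset.mem_coe]
      intro hmem
      apply hν
      show W ν = ∑ ν₀ ∈ F, if ν = ν₀ then W ν₀ else 0
      rw [Finset.sum_ite_eq F ν (fun ν₀ => W ν₀), if_pos hmem]
  have hWint : Integrable W T := by
    refine Integrable.mono' (integrable_const 1) hWaesm ?_
    filter_upwards with ν
    obtain ⟨h0, h1⟩ := gain_mem_Icc u v hu hv ν
    rw [Real.norm_eq_abs, abs_le]; exact ⟨by linarith, h1⟩
  -- W = 1 a.e.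
  have hae : (fun ν => 1 - W ν) =ᵐ[T] 0 := by
    refine (integral_eq_zero_iff_of_nonneg_ae ?_ ((integrable_const 1).sub hWint)).1 ?_
    · filter_upwards with ν
      obtain ⟨h0, h1⟩ := gain_mem_Icc u v hu hv ν
      simp only [Pi.zero_apply, Pi.sub_apply]
      show (0:ℝ) ≤ 1 - W ν
      simp only [hW]; linarith
    · simp only [Pi.sub_apply]
      rw [integral_sub (integrable_const 1) hWint]
      simp [hopt]
  have haeset : T {ν | 1 - W ν ≠ 0} = 0 := by
    have := ae_iff.1 hae
    simpa [Pi.sub_apply] using this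
  -- the mass is carried by the vertex set E
  set E : Finset (stdSimplex ℝ A) := Finset.image e Finset.univ with hE
  have hEc : T (↑E)ᶜ = 0 := by
    refine measure_mono_null (fun ν hν => ?_) haeset
    simp only [Set.mem_compl_iff, Finset.mem_coe, hE, Finset.mem_image] at hν
    simp only [Set.mem_setOf_eq]
    intro h0
    have h1 : W ν = 1 := by linarith [sub_eq_zero.1 h0]
    obtain ⟨s, rfl⟩ := (gain_eq_one_iff u v hu hv e he ν).1 h1
    exact hν ⟨s, Finset.mem_univ s, rfl⟩
  have hEmem : ∀ᵐ ν ∂T, ν ∈ (↑E : Set (stdSimplex ℝ A)) := by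
    rw [ae_iff]
    exact hEc
  -- singleton masses
  have hsingle : ∀ s, T {e s} = ENNReal.ofReal ((μ : A → ℝ) s) := by
    intro s
    have hint : Integrable (fun ν : stdSimplex ℝ A => (ν : A → ℝ) s) T := by
      refine Integrable.mono' (integrable_const 1)
        (((measurable_pi_apply s).comp measurable_subtype_coe).aestronglyMeasurable) ?_
      filter_upwards with ν
      rw [Real.norm_eq_abs, abs_le]
      exact ⟨by linarith [coord_nonneg ν s], coord_le_one ν s⟩
    have := hbary s
    rw [← Measure.restrict_eq_self_of_ae_mem hEmem,
      integral_finset E hint.integrableOn] at this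
    rw [hE, Finset.sum_image (fun a _ b _ h => einj h)] at this
    rw [Finset.sum_eq_single s (fun t _ hts => by rw [he]; simp [Ne.symm hts]) (by simp)] at this
    rw [he] at this
    simp only [if_true, smul_eq_mul, mul_one] at this
    rw [← this, measureReal_def, ENNReal.ofReal_toReal (measure_ne_top _ _)]
  constructor
  · -- measure identity
    ext X hX
    have h1 : T X = T (X ∩ ↑E) := (measure_inter_conull hEc).symm
    have h2 : X ∩ ↑E = ↑(E.filter (· ∈ X)) := by
      ext ν; simp [Finset.mem_filter, and_comm]
    rw [h1, h2, finset_meas]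
    rw [Finset.sum_filter, hE, Finset.sum_image (fun a _ b _ h => einj h)]
    rw [show ((∑ s, ENNReal.ofReal ((μ : A → ℝ) s) • Measure.dirac (e s)) X)
        = ∑ s, ENNReal.ofReal ((μ : A → ℝ) s) * Measure.dirac (e s) X by
      simp [Measure.coe_finset_sum, Finset.sum_apply]]
    congr 1; funext s
    rw [Measure.dirac_apply' _ hX]
    by_cases hs : e s ∈ X
    · simp [hs, hsingle s, Set.indicator_of_mem hs]
    · simp [hs, Set.indicator_of_notMem hs]
  · -- cardinality bound
    intro F' hF'
    have hsub : E ⊆ F' := by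
      intro ν hν
      rw [hE, Finset.mem_image] at hν
      obtain ⟨s, -, rfl⟩ := hν
      by_contra hns
      have h0 : T {e s} = 0 := by
        refine measure_mono_null ?_ (hcompl F' hF')
        simpa using hns
      rw [hsingle s] at h0
      exact absurd h0 (ne_of_gt (ENNReal.ofReal_pos.2 (hμ s)))
    calc Fintype.card A = E.card := by
          rw [hE, Finset.card_image_of_injective _ einj, Finset.card_univ]
      _ ≤ F'.card := Finset.card_le_card hsub

end Aux

/-- **lower bound on the number of messages.** With `S = A`, `|A| ≥ 2`,
matching utilities `u(s,a) = v(s,a) = 1_{a=s}` and a full-support prior `μ`, the optimal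
value `sup_{τ ∈ T_μ} ∫ W dτ` equals `1` and the unique finitely supported optimal `τ` is
`Σ_s μ(s) δ_{δ_s}`, whose support has exactly `|A|` points. -/
theorem lower_bound_on_messages {A : Type*} [Fintype A] [DecidableEq A]
    (hA : 2 ≤ Fintype.card A)
    (u v : A → A → ℝ)
    (hu : ∀ s a, u s a = if a = s then 1 else 0)
    (hv : ∀ s a, v s a = if a = s then 1 else 0)
    (μ : stdSimplex ℝ A) (hμ : ∀ s, 0 < (μ : A → ℝ) s)
    (e : A → stdSimplex ℝ A) (he : ∀ s s', (e s : A → ℝ) s' = if s' = s then 1 else 0) :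
    sSup {x : ℝ | ∃ τ : ProbabilityMeasure (stdSimplex ℝ A),
        (∀ s, (∫ ν, (ν : A → ℝ) s ∂(τ : Measure (stdSimplex ℝ A))) = (μ : A → ℝ) s) ∧
        x = ∫ ν, senderGain₁ u v ν ∂(τ : Measure (stdSimplex ℝ A))} = 1 ∧
    ∀ τ : ProbabilityMeasure (stdSimplex ℝ A),
      (∀ s, (∫ ν, (ν : A → ℝ) s ∂(τ : Measure (stdSimplex ℝ A))) = (μ : A → ℝ) s) →
      (∃ F : Finset (stdSimplex ℝ A), (τ : Measure (stdSimplex ℝ A)) (↑F) = 1) →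
      (∫ ν, senderGain₁ u v ν ∂(τ : Measure (stdSimplex ℝ A))) = 1 →
      ((τ : Measure (stdSimplex ℝ A)) =
          ∑ s, ENNReal.ofReal ((μ : A → ℝ) s) • Measure.dirac (e s)) ∧
      (∀ F : Finset (stdSimplex ℝ A),
        (τ : Measure (stdSimplex ℝ A)) (↑F) = 1 → Fintype.card A ≤ F.card) :=
  ⟨part1 hA u v hu hv μ hμ e he,
   fun τ hbary hfin hopt => part2 hA u v hu hv μ hμ e he τ hbary hfin hopt⟩

end
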